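/- arXiv:1301.6328 — 8 statements merged into one kernel-verified Lean document; each statement's English description precedes it below -/
import Mathlib

section
/- Let G be a finite group and G i (i : Fin n) a family of subgroups. For every A : Finset (Fin n), the projection of the quasi-uniform code onto the coordinates in A satisfies Nat.card (Set.range (fun g : G => fun i : A => (QuotientGroup.mk g : G ⧸ G (↑i)))) = (⨅ i ∈ A, G i).index. -/
theorem stmt_2 {G : Type*} [Group G] [Finite G] {n : ℕ} (Gs : Fin n → Subgroup G)
    (A : Finset (Fin n)) :
    Nat.card (Set.range (fun g : G => fun i : A => (QuotientGroup.mk g : G ⧸ Gs (↑i))))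
      = (⨅ i ∈ A, Gs i).index := by
  classical
  set H := ⨅ i ∈ A, Gs i with hH
  let f : G → ∀ i : A, G ⧸ Gs (↑i) := fun g i => QuotientGroup.mk g
  have hrespect : ∀ g g' : G, (QuotientGroup.mk g : G ⧸ H) = QuotientGroup.mk g' → f g = f g' := by
    intro g g' h
    rw [QuotientGroup.eq] at h
    funext i
    have hm : g⁻¹ * g' ∈ Gs (↑i) := by
      simp only [hH, Subgroup.mem_iInf] at h
      exact h i i.2
    exact (QuotientGroup.eq).mpr hm
  let ψ : G ⧸ H → ∀ i : A, G ⧸ Gs (↑i) :=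
    fun x => Quotient.liftOn' x f (fun g g' hgg' => hrespect g g' (Quotient.sound' hgg'))
  have hinj : Function.Injective ψ := by
    intro x y
    induction x using QuotientGroup.induction_on with
    | H g =>
    induction y using QuotientGroup.induction_on with
    | H g' =>
    intro h
    have hfg : f g = f g' := h
    rw [QuotientGroup.eq]
    simp only [hH, Subgroup.mem_iInf]
    intro i hi
    have := congrFun hfg ⟨i, hi⟩
    exact (QuotientGroup.eq).mp this
  have hrange : Set.range ψ = Set.range f := by
    ext x
    constructor
    · rintro ⟨y, rfl⟩
      induction y using QuotientGroup.induction_on with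
      | H g => exact ⟨g, rfl⟩
    · rintro ⟨g, rfl⟩
      exact ⟨QuotientGroup.mk g, rfl⟩
  calc Nat.card (Set.range f) = Nat.card (Set.range ψ) := by rw [hrange]
    _ = Nat.card (G ⧸ H) := Nat.card_range_of_injective hinj
    _ = H.index := rfl
end

section
/- Let G be a finite nontrivial commutative group and G i (i : Fin n) a family of subgroups with ⨅ i, G i = ⊥. Then the minimum Hamming distance of the quasi-uniform code C = Set.range φ, namely sInf {d : ℕ | ∃ g g' : G, φ g ≠ φ g' ∧ hammingDist (φ g) (φ g') = d}, equals n - sSup {A.card | A : Finset (Fin n), ∃ g : G, g ≠ 1 ∧ ∀ i ∈ A, g ∈ G i}. -/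
attribute [local instance] Classical.propDecidable

theorem stmt_10 {G : Type*} [CommGroup G] [Finite G] [Nontrivial G] {n : ℕ}
    (Gs : Fin n → Subgroup G) (h : ⨅ i, Gs i = ⊥) :
    sInf {d : ℕ | ∃ g g' : G,
        (fun i => (QuotientGroup.mk g : G ⧸ Gs i)) ≠ (fun i => (QuotientGroup.mk g' : G ⧸ Gs i)) ∧
        hammingDist (fun i => (QuotientGroup.mk g : G ⧸ Gs i))
          (fun i => (QuotientGroup.mk g' : G ⧸ Gs i)) = d}
      = n - sSup {c : ℕ | ∃ A : Finset (Fin n),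
          (∃ g : G, g ≠ 1 ∧ ∀ i ∈ A, g ∈ Gs i) ∧ A.card = c} := by
  classical
  set T := {c : ℕ | ∃ A : Finset (Fin n),
      (∃ g : G, g ≠ 1 ∧ ∀ i ∈ A, g ∈ Gs i) ∧ A.card = c} with hT
  set S := {d : ℕ | ∃ g g' : G,
      (fun i => (QuotientGroup.mk g : G ⧸ Gs i)) ≠ (fun i => (QuotientGroup.mk g' : G ⧸ Gs i)) ∧
      hammingDist (fun i => (QuotientGroup.mk g : G ⧸ Gs i))
        (fun i => (QuotientGroup.mk g' : G ⧸ Gs i)) = d} with hS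
  have hTne : T.Nonempty := by
    obtain ⟨g, hg⟩ := exists_ne (1 : G)
    exact ⟨0, ∅, ⟨g, hg, by simp⟩, rfl⟩
  have hTbdd : BddAbove T := by
    refine ⟨n, fun c hc => ?_⟩
    obtain ⟨A, _, hA⟩ := hc
    rw [← hA]
    simpa using Finset.card_le_card (Finset.subset_univ A)
  have hmmem := Nat.sSup_mem hTne hTbdd
  set m := sSup T with hm
  -- the set A_h of indices containing h
  have key : ∀ g g' : G, hammingDist (fun i => (QuotientGroup.mk g : G ⧸ Gs i))
      (fun i => (QuotientGroup.mk g' : G ⧸ Gs i))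
      = n - (Finset.univ.filter (fun i => g⁻¹ * g' ∈ Gs i)).card := by
    intro g g'
    have heq : ∀ i : Fin n,
        ((QuotientGroup.mk g : G ⧸ Gs i) = QuotientGroup.mk g') ↔ g⁻¹ * g' ∈ Gs i :=
      fun i => QuotientGroup.eq
    have hsum := Finset.card_filter_add_card_filter_not
      (s := (Finset.univ : Finset (Fin n))) (p := fun i => g⁻¹ * g' ∈ Gs i)
    have hdist : hammingDist (fun i => (QuotientGroup.mk g : G ⧸ Gs i))
        (fun i => (QuotientGroup.mk g' : G ⧸ Gs i))
        = (Finset.univ.filter (fun i => ¬ g⁻¹ * g' ∈ Gs i)).card := by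
      unfold hammingDist
      congr 1
      apply Finset.filter_congr
      intro i _
      simp [heq i]
    rw [hdist]
    simp only [Finset.card_univ, Fintype.card_fin] at hsum
    omega
  -- if h ≠ 1 then ∃ i, h ∉ Gs i
  have hnotall : ∀ g : G, g ≠ 1 → ∃ i, g ∉ Gs i := by
    intro g hg
    by_contra hc
    push_neg at hc
    have : g ∈ ⨅ i, Gs i := Subgroup.mem_iInf.2 hc
    rw [h] at this
    exact hg this
  -- witness for sInf ≤ n - m
  obtain ⟨A, ⟨g₀, hg₀, hg₀mem⟩, hAcard⟩ := hmmem
  have hφne : (fun i => (QuotientGroup.mk g₀ : G ⧸ Gs i)) ≠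
      (fun i => (QuotientGroup.mk (1 : G) : G ⧸ Gs i)) := by
    obtain ⟨i, hi⟩ := hnotall g₀ hg₀
    intro hcontra
    apply hi
    have := congrFun hcontra i
    have h2 : g₀⁻¹ * 1 ∈ Gs i := QuotientGroup.eq.mp this
    simpa using (Gs i).inv_mem h2
  have hSwit : n - (Finset.univ.filter (fun i => g₀⁻¹ * 1 ∈ Gs i)).card ∈ S :=
    ⟨g₀, 1, hφne, key g₀ 1⟩
  have hle : sInf S ≤ n - m := by
    refine le_trans (Nat.sInf_le hSwit) ?_
    refine Nat.sub_le_sub_left ?_ n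
    rw [← hAcard]
    apply Finset.card_le_card
    intro i hi
    simp only [Finset.mem_filter, Finset.mem_univ, true_and, mul_one]
    exact (Gs i).inv_mem (hg₀mem i hi)
  have hge : n - m ≤ sInf S := by
    refine le_csInf ⟨_, hSwit⟩ ?_
    rintro d ⟨g, g', hne, hd⟩
    rw [key g g'] at hd
    have hgne : g⁻¹ * g' ≠ 1 := by
      intro hcontra
      apply hne
      have : g = g' := by
        have := mul_eq_one_iff_inv_eq.mp hcontra
        simpa [eq_comm] using this
      rw [this]
    have hcardT : (Finset.univ.filter (fun i => g⁻¹ * g' ∈ Gs i)).card ∈ T := by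
      refine ⟨_, ⟨g⁻¹ * g', hgne, ?_⟩, rfl⟩
      intro i hi
      exact (Finset.mem_filter.mp hi).2
    have := le_csSup hTbdd hcardT
    omega
  omega
end

section
/- Let G be a finite nontrivial group and G i (i : Fin n) a family of normal subgroups with ⨅ i, G i = ⊥. Then the minimum Hamming distance of the quasi-uniform code C = Set.range φ, namely sInf {d : ℕ | ∃ g g' : G, φ g ≠ φ g' ∧ hammingDist (φ g) (φ g') = d}, equals n - sSup {A.card | A : Finset (Fin n), ∃ g : G, g ≠ 1 ∧ ∀ i ∈ A, g ∈ G i}, and it also equals the minimum weight sInf {w : ℕ | ∃ g : G, g ≠ 1 ∧ w = (Finset.univ.filter (fun i => g ∉ G i)).card}. -/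
attribute [local instance] Classical.propDecidable

section
variable {G : Type*} [Group G] {n : ℕ}

lemma phi_eq_iff (Gs : Fin n → Subgroup G) (h : ⨅ i, Gs i = ⊥) (g g' : G) :
    (fun i => (QuotientGroup.mk g : G ⧸ Gs i)) = (fun i => (QuotientGroup.mk g' : G ⧸ Gs i)) ↔
      g = g' := by
  constructor
  · intro he
    have h1 : ∀ i, g⁻¹ * g' ∈ Gs i := fun i => (QuotientGroup.eq).mp (congrFun he i)
    have h2 : g⁻¹ * g' ∈ ⨅ i, Gs i := Subgroup.mem_iInf.mpr h1
    rw [h, Subgroup.mem_bot] at h2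
    exact inv_mul_eq_one.mp h2
  · rintro rfl; rfl

lemma dist_eq (Gs : Fin n → Subgroup G) (g g' : G) :
    hammingDist (fun i => (QuotientGroup.mk g : G ⧸ Gs i))
      (fun i => (QuotientGroup.mk g' : G ⧸ Gs i))
      = (Finset.univ.filter (fun i => g⁻¹ * g' ∉ Gs i)).card := by
  unfold hammingDist
  congr 1
  apply Finset.filter_congr
  intro i _
  simp only [ne_eq, QuotientGroup.eq, eq_iff_iff]
end

theorem stmt_11 {G : Type*} [Group G] [Finite G] [Nontrivial G] {n : ℕ}
    (Gs : Fin n → Subgroup G) [∀ i, (Gs i).Normal] (h : ⨅ i, Gs i = ⊥) :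
    sInf {d : ℕ | ∃ g g' : G,
        (fun i => (QuotientGroup.mk g : G ⧸ Gs i)) ≠ (fun i => (QuotientGroup.mk g' : G ⧸ Gs i)) ∧
        hammingDist (fun i => (QuotientGroup.mk g : G ⧸ Gs i))
          (fun i => (QuotientGroup.mk g' : G ⧸ Gs i)) = d}
      = n - sSup {c : ℕ | ∃ A : Finset (Fin n),
          (∃ g : G, g ≠ 1 ∧ ∀ i ∈ A, g ∈ Gs i) ∧ A.card = c} ∧
    sInf {d : ℕ | ∃ g g' : G,
        (fun i => (QuotientGroup.mk g : G ⧸ Gs i)) ≠ (fun i => (QuotientGroup.mk g' : G ⧸ Gs i)) ∧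
        hammingDist (fun i => (QuotientGroup.mk g : G ⧸ Gs i))
          (fun i => (QuotientGroup.mk g' : G ⧸ Gs i)) = d}
      = sInf {w : ℕ | ∃ g : G, g ≠ 1 ∧
          w = (Finset.univ.filter (fun i => g ∉ Gs i)).card} := by
  have hDW : {d : ℕ | ∃ g g' : G,
        (fun i => (QuotientGroup.mk g : G ⧸ Gs i)) ≠ (fun i => (QuotientGroup.mk g' : G ⧸ Gs i)) ∧
        hammingDist (fun i => (QuotientGroup.mk g : G ⧸ Gs i))
          (fun i => (QuotientGroup.mk g' : G ⧸ Gs i)) = d}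
      = {w : ℕ | ∃ g : G, g ≠ 1 ∧
          w = (Finset.univ.filter (fun i => g ∉ Gs i)).card} := by
    ext d
    simp only [Set.mem_setOf_eq]
    constructor
    · rintro ⟨g, g', hne, hd⟩
      refine ⟨g⁻¹ * g', ?_, ?_⟩
      · intro h1
        exact hne ((phi_eq_iff Gs h g g').mpr (inv_mul_eq_one.mp h1))
      · rw [← hd, dist_eq]
    · rintro ⟨g, hg, hw⟩
      refine ⟨1, g, ?_, ?_⟩
      · intro he; exact hg ((phi_eq_iff Gs h 1 g).mp he).symm
      · rw [dist_eq]; simpa using hw.symm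
  rw [hDW]
  refine ⟨?_, rfl⟩
  set Cs := {c : ℕ | ∃ A : Finset (Fin n),
      (∃ g : G, g ≠ 1 ∧ ∀ i ∈ A, g ∈ Gs i) ∧ A.card = c} with hCs
  have hbdd : BddAbove Cs := by
    refine ⟨n, ?_⟩
    rintro c ⟨A, _, rfl⟩
    exact A.card_le_univ.trans_eq (by simp)
  obtain ⟨g0, hg0⟩ := exists_ne (1 : G)
  have hcne : Cs.Nonempty := ⟨0, ∅, ⟨g0, hg0, by simp⟩, rfl⟩
  set T : G → Finset (Fin n) := fun g => Finset.univ.filter (fun i => g ∈ Gs i) with hT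
  have hST : ∀ g : G, (Finset.univ.filter (fun i => g ∉ Gs i)).card = n - (T g).card := by
    intro g
    have he : Finset.univ.filter (fun i => g ∉ Gs i) = Finset.univ \ T g :=
      Finset.filter_not _ _
    rw [he, Finset.card_sdiff_of_subset (Finset.filter_subset _ _)]
    simp [hT]
  have hTle : ∀ g' : G, g' ≠ 1 → (T g').card ≤ sSup Cs := fun g' hg' =>
    le_csSup hbdd ⟨T g', ⟨g', hg', fun i hi => (Finset.mem_filter.mp hi).2⟩, rfl⟩
  obtain ⟨A, ⟨g, hg, hA⟩, hcard⟩ := Nat.sSup_mem hcne hbdd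
  have h1 : sSup Cs ≤ (T g).card := by
    rw [← hcard]
    exact Finset.card_le_card (fun i hi => Finset.mem_filter.mpr ⟨Finset.mem_univ i, hA i hi⟩)
  have hTg : (T g).card = sSup Cs := le_antisymm (hTle g hg) h1
  apply le_antisymm
  · exact Nat.sInf_le ⟨g, hg, by rw [hST, hTg]⟩
  · refine le_csInf ⟨_, g0, hg0, rfl⟩ ?_
    rintro w ⟨g', hg', rfl⟩
    rw [hST]
    exact Nat.sub_le_sub_left (hTle g' hg') n
end

section
/- Let p be a prime and G i (i : Fin (p+1)) the subgroups of ZMod p × ZMod p given by G i = Subgroup.zpowers (1, (i : ZMod p)) when (i : ℕ) < p and G i = Subgroup.zpowers (0, 1) otherwise. Then the quasi-uniform code C = Set.range φ (where φ(g) = (QuotientGroup.mk g : (ZMod p × ZMod p) ⧸ G i)_i) has Nat.card C = p², and its minimum Hamming distance sInf {d : ℕ | ∃ g g', φ g ≠ φ g' ∧ hammingDist (φ g) (φ g') = d} equals p. -/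
attribute [local instance] Classical.propDecidable

lemma aux1 {p : ℕ} [Fact p.Prime] (c : ZMod p) (x : ZMod p × ZMod p) :
    x ∈ AddSubgroup.zmultiples ((1 : ZMod p), c) ↔ x.2 = x.1 * c := by
  obtain ⟨a, b⟩ := x
  rw [AddSubgroup.mem_zmultiples_iff]
  constructor
  · rintro ⟨k, hk⟩
    rw [Prod.smul_mk, Prod.mk.injEq, zsmul_eq_mul, zsmul_eq_mul] at hk
    obtain ⟨h1, h2⟩ := hk
    simp only
    rw [← h1, ← h2]; ring
  · intro h
    refine ⟨(a.val : ℤ), ?_⟩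
    rw [Prod.smul_mk, Prod.mk.injEq, zsmul_eq_mul, zsmul_eq_mul]
    push_cast
    rw [ZMod.natCast_val, ZMod.cast_id]
    simp only at h
    constructor <;> [ring; rw [h]]

lemma aux2 {p : ℕ} [Fact p.Prime] (x : ZMod p × ZMod p) :
    x ∈ AddSubgroup.zmultiples ((0 : ZMod p), (1 : ZMod p)) ↔ x.1 = 0 := by
  obtain ⟨a, b⟩ := x
  rw [AddSubgroup.mem_zmultiples_iff]
  constructor
  · rintro ⟨k, hk⟩
    rw [Prod.smul_mk, Prod.mk.injEq] at hk
    simp at hk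
    exact hk.1.symm
  · intro h
    refine ⟨(b.val : ℤ), ?_⟩
    rw [Prod.smul_mk, Prod.mk.injEq, zsmul_eq_mul, zsmul_eq_mul]
    push_cast
    rw [ZMod.natCast_val, ZMod.cast_id]
    simp only at h
    simp [h]

lemma auxuniq {p : ℕ} [Fact p.Prime] (Gs : Fin (p + 1) → AddSubgroup (ZMod p × ZMod p))
    (hGs : ∀ i, Gs i = if (i : ℕ) < p
        then AddSubgroup.zmultiples ((1 : ZMod p), ((i : ℕ) : ZMod p))
        else AddSubgroup.zmultiples ((0 : ZMod p), (1 : ZMod p)))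
    (x : ZMod p × ZMod p) (hx : x ≠ 0) : ∃! i, x ∈ Gs i := by
  obtain ⟨a, b⟩ := x
  have hp : 0 < p := (Fact.out : p.Prime).pos
  by_cases ha : a = 0
  · have hb : b ≠ 0 := by simp [Prod.ext_iff, ha] at hx; exact hx
    refine ⟨⟨p, lt_add_one p⟩, ?_, ?_⟩
    · show (a, b) ∈ Gs ⟨p, lt_add_one p⟩
      rw [hGs]; simp [aux2, ha]
    · intro j hj
      rw [hGs] at hj
      by_cases hjp : (j : ℕ) < p
      · rw [if_pos hjp, aux1] at hj
        subst ha; simp at hj; exact absurd hj hb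
      · exact Fin.ext (Nat.le_antisymm (Nat.lt_succ_iff.mp j.isLt) (not_lt.mp hjp))
  · set c := b * a⁻¹ with hc
    have hcv : c.val < p := ZMod.val_lt c
    refine ⟨⟨c.val, by omega⟩, ?_, ?_⟩
    · show (a, b) ∈ Gs ⟨c.val, by omega⟩
      rw [hGs]; simp only [if_pos hcv]
      rw [show ((c.val : ℕ) : ZMod p) = c from by rw [ZMod.natCast_val, ZMod.cast_id], aux1, hc]
      field_simp
    · intro j hj
      rw [hGs] at hj
      by_cases hjp : (j : ℕ) < p
      · rw [if_pos hjp, aux1] at hj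
        simp only at hj
        have : ((j : ℕ) : ZMod p) = c := by rw [hc]; field_simp; rw [hj]; ring
        apply Fin.ext
        simp only
        rw [← this, ZMod.val_cast_of_lt hjp]
      · rw [if_neg hjp, aux2] at hj
        exact absurd hj ha

theorem stmt_13 (p : ℕ) [Fact p.Prime]
    (Gs : Fin (p + 1) → AddSubgroup (ZMod p × ZMod p))
    (hGs : ∀ i, Gs i = if (i : ℕ) < p
        then AddSubgroup.zmultiples ((1 : ZMod p), ((i : ℕ) : ZMod p))
        else AddSubgroup.zmultiples ((0 : ZMod p), (1 : ZMod p))) :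
    Nat.card (Set.range (fun g : ZMod p × ZMod p =>
        fun i => (QuotientAddGroup.mk g : (ZMod p × ZMod p) ⧸ Gs i))) = p ^ 2 ∧
    sInf {d : ℕ | ∃ g g' : ZMod p × ZMod p,
        (fun i => (QuotientAddGroup.mk g : (ZMod p × ZMod p) ⧸ Gs i))
          ≠ (fun i => (QuotientAddGroup.mk g' : (ZMod p × ZMod p) ⧸ Gs i)) ∧
        hammingDist (fun i => (QuotientAddGroup.mk g : (ZMod p × ZMod p) ⧸ Gs i))
          (fun i => (QuotientAddGroup.mk g' : (ZMod p × ZMod p) ⧸ Gs i)) = d} = p := by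
  have hp : 1 < p := (Fact.out : p.Prime).one_lt
  have hinj : Function.Injective (fun g : ZMod p × ZMod p =>
      fun i => (QuotientAddGroup.mk g : (ZMod p × ZMod p) ⧸ Gs i)) := by
    intro g g' h
    have hmem : ∀ i, -g + g' ∈ Gs i := fun i =>
      (QuotientAddGroup.eq).mp (congrFun h i)
    have h0 := hmem ⟨0, by omega⟩
    have hl := hmem ⟨p, lt_add_one p⟩
    rw [hGs] at h0 hl
    simp only [show ((⟨0, by omega⟩ : Fin (p+1)) : ℕ) = 0 from rfl, if_pos (by omega : 0 < p),
      Nat.cast_zero, aux1] at h0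
    simp only [show ((⟨p, lt_add_one p⟩ : Fin (p+1)) : ℕ) = p from rfl, if_neg (lt_irrefl p),
      aux2] at hl
    have : -g + g' = 0 := by
      apply Prod.ext
      · exact hl
      · simpa using h0
    exact (neg_add_eq_zero.mp this)
  have hdist : ∀ g g' : ZMod p × ZMod p, g ≠ g' →
      hammingDist (fun i => (QuotientAddGroup.mk g : (ZMod p × ZMod p) ⧸ Gs i))
        (fun i => (QuotientAddGroup.mk g' : (ZMod p × ZMod p) ⧸ Gs i)) = p := by
    intro g g' hne
    have hx : -g + g' ≠ 0 := fun h => hne (neg_add_eq_zero.mp h)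
    obtain ⟨i₀, hi₀, huniq⟩ := auxuniq Gs hGs _ hx
    have hset : ∀ i : Fin (p+1),
        ((QuotientAddGroup.mk g : (ZMod p × ZMod p) ⧸ Gs i) ≠ QuotientAddGroup.mk g') ↔ i ≠ i₀ := by
      intro i
      rw [Ne, QuotientAddGroup.eq]
      constructor
      · intro h hi; exact h (hi ▸ hi₀)
      · intro h hm; exact h (huniq i hm)
    have hfe : (Finset.filter (fun i => (QuotientAddGroup.mk g : (ZMod p × ZMod p) ⧸ Gs i)
        ≠ (QuotientAddGroup.mk g' : (ZMod p × ZMod p) ⧸ Gs i)) Finset.univ) = Finset.univ.erase i₀ := by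
      ext i
      simp only [Finset.mem_filter, Finset.mem_univ, true_and, Finset.mem_erase, and_true]
      exact hset i
    unfold hammingDist
    beta_reduce
    rw [hfe, Finset.card_erase_of_mem (Finset.mem_univ _), Finset.card_univ]
    simp
  constructor
  · rw [Nat.card_range_of_injective hinj, Nat.card_eq_fintype_card, Fintype.card_prod,
      ZMod.card, sq]
  · have hsetEq : {d : ℕ | ∃ g g' : ZMod p × ZMod p,
        (fun i => (QuotientAddGroup.mk g : (ZMod p × ZMod p) ⧸ Gs i))
          ≠ (fun i => (QuotientAddGroup.mk g' : (ZMod p × ZMod p) ⧸ Gs i)) ∧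
        hammingDist (fun i => (QuotientAddGroup.mk g : (ZMod p × ZMod p) ⧸ Gs i))
          (fun i => (QuotientAddGroup.mk g' : (ZMod p × ZMod p) ⧸ Gs i)) = d} = {p} := by
      ext d
      simp only [Set.mem_setOf_eq, Set.mem_singleton_iff]
      constructor
      · rintro ⟨g, g', hne, hd⟩
        have hgg : g ≠ g' := fun h => hne (by rw [h])
        rw [← hd, hdist g g' hgg]
      · intro hd
        have hne : ((0, 0) : ZMod p × ZMod p) ≠ (1, 0) := by
          intro h
          exact zero_ne_one (congrArg Prod.fst h)
        exact ⟨(0, 0), (1, 0), fun h => hne (hinj h), hd ▸ hdist _ _ hne⟩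
    rw [hsetEq, csInf_singleton]
end

section
/- Let p be a prime, G a finite p-group (Nat.card G = p ^ m for some m), and G i (i : Fin n) a family of subgroups each of index p ((G i).index = p). Then the quasi-uniform code obtained from G and the G i is almost affine: for every A : Finset (Fin n), there exists k : ℕ such that Nat.card (Set.range (fun g : G => fun i : A => (QuotientGroup.mk g : G ⧸ G (↑i)))) = p ^ k. -/
theorem stmt_14 (p : ℕ) (hp : p.Prime) {G : Type*} [Group G] [Finite G]
    (hG : ∃ m : ℕ, Nat.card G = p ^ m) {n : ℕ} (Gs : Fin n → Subgroup G)
    (hGs : ∀ i, (Gs i).index = p) (A : Finset (Fin n)) :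
    ∃ k : ℕ, Nat.card (Set.range (fun g : G =>
        fun i : A => (QuotientGroup.mk g : G ⧸ Gs (↑i)))) = p ^ k := by
  obtain ⟨m, hm⟩ := hG
  set f : A → Subgroup G := fun i => Gs ↑i with hf
  set H : Subgroup G := ⨅ i : A, f i with hH
  have hcomp : (fun g : G => fun i : A => (QuotientGroup.mk g : G ⧸ Gs (↑i)))
      = (Subgroup.quotientiInfEmbedding f) ∘ (QuotientGroup.mk (s := H)) := by
    funext g
    ext i
    simp [Subgroup.quotientiInfEmbedding_apply_mk, f]
  have hrange : Set.range (fun g : G => fun i : A => (QuotientGroup.mk g : G ⧸ Gs (↑i)))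
      = Set.range (Subgroup.quotientiInfEmbedding f) := by
    rw [hcomp, Set.range_comp, QuotientGroup.mk_surjective.range_eq, Set.image_univ]
  have hcard : Nat.card (Set.range (fun g : G =>
      fun i : A => (QuotientGroup.mk g : G ⧸ Gs (↑i)))) = H.index := by
    rw [hrange, Nat.card_range_of_injective (Subgroup.quotientiInfEmbedding f).injective]
    rfl
  have hdvd : H.index ∣ p ^ m := hm ▸ Subgroup.index_dvd_card H
  obtain ⟨k, -, hk⟩ := (Nat.dvd_prime_pow hp).mp hdvd
  exact ⟨k, by rw [hcard, hk]⟩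
end

section
/- Let G be a finite group that is not nilpotent. Then there exist n : ℕ and a family of subgroups G i (i : Fin n) of G such that no finite abelian group represents (G, (G i)): for every finite commutative group A and every family of subgroups A i (i : Fin n) of A, there exists a nonempty S : Finset (Fin n) with (⨅ i ∈ S, G i).index ≠ (⨅ i ∈ S, A i).index. -/
universe u

open Subgroup

lemma abelian_index_inf_dvd {A : Type u} [CommGroup A] (H K : Subgroup A) :
    (H ⊓ K).index ∣ H.index * K.index := by
  have h1 : (H ⊓ K).relIndex H * H.index = (H ⊓ K).index :=
    relIndex_mul_index inf_le_left
  rw [← h1, inf_relIndex_left, mul_comm (H.index)]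
  exact Nat.mul_dvd_mul (relIndex_dvd_index_of_normal K H) dvd_rfl

theorem stmt_15 {G : Type*} [Group G] [Finite G] (hG : ¬ Group.IsNilpotent G) :
    ∃ (n : ℕ) (Gs : Fin n → Subgroup G),
      ∀ (A : Type u) [CommGroup A] [Finite A] (As : Fin n → Subgroup A),
        ∃ S : Finset (Fin n), S.Nonempty ∧
          (⨅ i ∈ S, Gs i).index ≠ (⨅ i ∈ S, As i).index := by
  classical
  have htfae := (isNilpotent_of_finite_tfae (G := G)).out 3 0
  rw [← htfae] at hG
  push_neg at hG
  obtain ⟨p, hp, P, hP⟩ := hG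
  haveI := hp
  rw [← Subgroup.normalizer_eq_top_iff] at hP
  obtain ⟨g, hg⟩ : ∃ g, g ∉ normalizer ((P : Subgroup G) : Set G) := by
    by_contra h; push_neg at h; exact hP (eq_top_iff.mpr fun x _ => h x)
  set Q : Sylow p G := g • P with hQdef
  have hPQ : Q ≠ P := fun h => hg (Sylow.smul_eq_iff_mem_normalizer.mp h)
  -- basic facts
  have hcardP : Nat.card (P : Subgroup G) = p ^ (Nat.card G).factorization p :=
    P.card_eq_multiplicity
  have hcardQ : Nat.card (Q : Subgroup G) = p ^ (Nat.card G).factorization p :=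
    Q.card_eq_multiplicity
  have hcards : Nat.card (Q : Subgroup G) = Nat.card (P : Subgroup G) := by
    rw [hcardP, hcardQ]
  have hcardne : Nat.card (P : Subgroup G) ≠ 0 := Nat.card_pos.ne'
  have hindQ : (Q : Subgroup G).index = (P : Subgroup G).index := by
    have h1 := Subgroup.card_mul_index (Q : Subgroup G)
    have h2 := Subgroup.card_mul_index (P : Subgroup G)
    rw [hcards] at h1
    exact Nat.eq_of_mul_eq_mul_left (Nat.pos_of_ne_zero hcardne) (h1.trans h2.symm)
  have hpm : ¬ p ∣ (P : Subgroup G).index := P.not_dvd_index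
  -- p divides the index of the intersection
  have hpdvd : p ∣ ((P : Subgroup G) ⊓ (Q : Subgroup G)).index := by
    have h1 : ((P : Subgroup G) ⊓ Q).relIndex P * (P : Subgroup G).index
        = ((P : Subgroup G) ⊓ Q).index := relIndex_mul_index inf_le_left
    have hr1 : ((P : Subgroup G) ⊓ Q).relIndex P ∣ Nat.card (P : Subgroup G) :=
      Subgroup.index_dvd_card _
    rw [hcardP] at hr1
    obtain ⟨k, hk, hkr⟩ := (Nat.dvd_prime_pow hp.out).mp hr1
    have hk0 : k ≠ 0 := by
      rintro rfl
      rw [pow_zero] at hkr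
      have hle : (P : Subgroup G) ≤ Q :=
        le_trans (Subgroup.relIndex_eq_one.mp hkr) inf_le_right
      exact hPQ (Sylow.ext (Subgroup.eq_of_le_of_card_ge hle hcards.le).symm)
    have : p ∣ ((P : Subgroup G) ⊓ Q).relIndex P := hkr ▸ dvd_pow_self p hk0
    exact h1 ▸ Dvd.dvd.mul_right this _
  refine ⟨2, ![P, Q], fun A _ _ As => ?_⟩
  by_cases h0 : (As 0).index = (P : Subgroup G).index
  · by_cases h1 : (As 1).index = (P : Subgroup G).index
    · refine ⟨{0, 1}, ⟨0, by simp⟩, fun h => ?_⟩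
      have hGside : (⨅ i ∈ ({0, 1} : Finset (Fin 2)), (![(P : Subgroup G), Q]) i)
          = (P : Subgroup G) ⊓ Q := by
          simp [iInf_or, iInf_inf_eq]
      have hAside : (⨅ i ∈ ({0, 1} : Finset (Fin 2)), As i) = As 0 ⊓ As 1 := by
          simp [iInf_or, iInf_inf_eq]
      rw [hGside, hAside] at h
      have hdvd : p ∣ (As 0 ⊓ As 1).index := h ▸ hpdvd
      have hd : p ∣ (As 0).index * (As 1).index := hdvd.trans (abelian_index_inf_dvd _ _)
      rcases (Nat.Prime.dvd_mul hp.out).mp hd with h' | h'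
      · rw [h0] at h'; exact hpm h'
      · rw [h1] at h'; exact hpm h'
    · refine ⟨{1}, ⟨1, by simp⟩, fun h => ?_⟩
      apply h1
      have hGside : (⨅ i ∈ ({1} : Finset (Fin 2)), (![(P : Subgroup G), Q]) i)
          = (Q : Subgroup G) := by simp
      have hAside : (⨅ i ∈ ({1} : Finset (Fin 2)), As i) = As 1 := by simp
      rw [hGside, hAside, hindQ] at h
      exact h.symm
  · refine ⟨{0}, ⟨0, by simp⟩, fun h => ?_⟩
    apply h0
    have hGside : (⨅ i ∈ ({0} : Finset (Fin 2)), (![(P : Subgroup G), Q]) i)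
        = (P : Subgroup G) := by simp
    have hAside : (⨅ i ∈ ({0} : Finset (Fin 2)), As i) = As 0 := by simp
    rw [hGside, hAside] at h
    exact h.symm
end

section
/- Let G be a finite group with subgroups G i (i : Fin n) and A a finite group with subgroups A i (i : Fin n), with Nat.card G = Nat.card A. If for every nonempty S : Finset (Fin n) the indices agree, (⨅ i ∈ S, G i).index = (⨅ i ∈ S, A i).index, then for every r : ℕ the number of group elements of weight r agree: Nat.card {g : G | (Finset.univ.filter (fun i => g ∉ G i)).card = r} = Nat.card {a : A | (Finset.univ.filter (fun i => a ∉ A i)).card = r}. -/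
attribute [local instance] Classical.propDecidable

theorem stmt_17_aux_sum {α : Type*} [Fintype α] {n : ℕ}
    (S : α → Finset (Fin n)) (p : Finset (Fin n) → Prop) [DecidablePred p]
    (hq : DecidablePred (fun a => p (S a))) :
    (@Finset.filter α (fun a => p (S a)) hq Finset.univ).card
      = ∑ U ∈ Finset.univ.powerset.filter p, (Finset.univ.filter (fun a => S a = U)).card := by
  simp only [Finset.card_filter]
  rw [Finset.sum_comm]
  refine Finset.sum_congr rfl fun a _ => ?_
  rw [Finset.sum_ite_eq]
  simp

theorem stmt_17 {G A : Type*} [Group G] [Finite G] [Group A] [Finite A]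
    {n : ℕ} (Gs : Fin n → Subgroup G) (As : Fin n → Subgroup A)
    (hcard : Nat.card G = Nat.card A)
    (hidx : ∀ S : Finset (Fin n), S.Nonempty →
      (⨅ i ∈ S, Gs i).index = (⨅ i ∈ S, As i).index)
    (r : ℕ) :
    Nat.card {g : G | (Finset.univ.filter (fun i => g ∉ Gs i)).card = r}
      = Nat.card {a : A | (Finset.univ.filter (fun i => a ∉ As i)).card = r} := by
  have _instG := Fintype.ofFinite G
  have _instA := Fintype.ofFinite A
  set SG : G → Finset (Fin n) := fun g => Finset.univ.filter (fun i => g ∈ Gs i) with hSG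
  set SA : A → Finset (Fin n) := fun a => Finset.univ.filter (fun i => a ∈ As i) with hSA
  set eG : Finset (Fin n) → ℕ :=
    fun T => (Finset.univ.filter (fun g => SG g = T)).card with heG
  set eA : Finset (Fin n) → ℕ :=
    fun T => (Finset.univ.filter (fun a => SA a = T)).card with heA
  -- cardinalities of the intersections agree
  have hN : ∀ T : Finset (Fin n),
      Nat.card (⨅ i ∈ T, Gs i : Subgroup G) = Nat.card (⨅ i ∈ T, As i : Subgroup A) := by
    intro T
    rcases T.eq_empty_or_nonempty with h | h
    · subst h
      have h1 : (⨅ i ∈ (∅ : Finset (Fin n)), Gs i : Subgroup G) = ⊤ := by simp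
      have h2 : (⨅ i ∈ (∅ : Finset (Fin n)), As i : Subgroup A) = ⊤ := by simp
      rw [h1, h2, Subgroup.card_top, Subgroup.card_top]; exact hcard
    · have h1 := Subgroup.card_mul_index (⨅ i ∈ T, Gs i)
      have h2 := Subgroup.card_mul_index (⨅ i ∈ T, As i)
      have hne : (⨅ i ∈ T, As i).index ≠ 0 := Subgroup.index_ne_zero_of_finite
      apply Nat.eq_of_mul_eq_mul_right (Nat.pos_of_ne_zero hne)
      rw [← hidx T h] at h2 ⊢
      omega
  -- counting elements lying in all subgroups indexed by T
  have hcount : ∀ T : Finset (Fin n),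
      (Finset.univ.filter (fun g : G => T ⊆ SG g)).card
        = (Finset.univ.filter (fun a : A => T ⊆ SA a)).card := by
    intro T
    have hG : (Finset.univ.filter (fun g : G => T ⊆ SG g))
        = Finset.univ.filter (· ∈ (⨅ i ∈ T, Gs i : Subgroup G)) := by
      refine Finset.filter_congr fun g _ => ?_
      simp [hSG, Subgroup.mem_iInf, Finset.subset_iff]
    have hA : (Finset.univ.filter (fun a : A => T ⊆ SA a))
        = Finset.univ.filter (· ∈ (⨅ i ∈ T, As i : Subgroup A)) := by
      refine Finset.filter_congr fun a _ => ?_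
      simp [hSA, Subgroup.mem_iInf, Finset.subset_iff]
    rw [hG, hA]
    have := hN T
    simpa [Nat.card_eq_fintype_card, Fintype.card_subtype] using this
  -- key: pointwise equality of the pattern counts
  have key : ∀ C : Finset (Fin n), eG Cᶜ = eA Cᶜ := by
    intro C
    induction C using Finset.strongInduction with
    | _ C ih =>
      set T := Cᶜ with hT
      have hTmem : T ∈ Finset.univ.powerset.filter (T ⊆ ·) := by simp
      have hGsum := stmt_17_aux_sum SG (T ⊆ ·) (fun g => inferInstance)
      have hAsum := stmt_17_aux_sum SA (T ⊆ ·) (fun a => inferInstance)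
      have hsplitG := Finset.add_sum_erase (Finset.univ.powerset.filter (T ⊆ ·))
        (fun U => (Finset.univ.filter (fun g : G => SG g = U)).card) hTmem
      have hsplitA := Finset.add_sum_erase (Finset.univ.powerset.filter (T ⊆ ·))
        (fun U => (Finset.univ.filter (fun a : A => SA a = U)).card) hTmem
      beta_reduce at hsplitG hsplitA
      beta_reduce at hGsum hAsum
      try simp only [Finset.filter_congr_decidable] at hGsum hAsum hsplitG hsplitA
      have hrest : ∑ U ∈ (Finset.univ.powerset.filter (T ⊆ ·)).erase T,
            (Finset.univ.filter (fun g : G => SG g = U)).card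
          = ∑ U ∈ (Finset.univ.powerset.filter (T ⊆ ·)).erase T,
            (Finset.univ.filter (fun a : A => SA a = U)).card := by
        refine Finset.sum_congr rfl fun U hU => ?_
        simp only [Finset.mem_erase, Finset.mem_filter, Finset.mem_powerset] at hU
        have hUssub : T ⊂ U := lt_of_le_of_ne hU.2.2 (Ne.symm hU.1)
        have hcompl : Uᶜ ⊂ C := by
          rw [hT] at hUssub
          simpa using Finset.compl_ssubset_compl.mpr hUssub
        have := ih Uᶜ hcompl
        simpa [heG, heA, compl_compl] using this
      have hc := hcount T
      try simp only [Finset.filter_congr_decidable] at hc hrest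
      rw [hGsum, ← hsplitG, hAsum, ← hsplitA, hrest] at hc
      exact Nat.add_right_cancel hc
  have key' : ∀ U : Finset (Fin n), eG U = eA U := by
    intro U
    have := key Uᶜ
    simpa [compl_compl] using this
  -- rewrite weights via complements of the pattern sets
  have hwG : ∀ g : G, Finset.univ.filter (fun i => g ∉ Gs i) = (SG g)ᶜ := by
    intro g; ext i; simp [hSG]
  have hwA : ∀ a : A, Finset.univ.filter (fun i => a ∉ As i) = (SA a)ᶜ := by
    intro a; ext i; simp [hSA]
  have hG2 : Nat.card {g : G | (Finset.univ.filter (fun i => g ∉ Gs i)).card = r}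
      = (Finset.univ.filter (fun g : G => ((SG g)ᶜ).card = r)).card := by
    simp only [hwG]
    simp [Nat.card_eq_fintype_card, Fintype.card_subtype]
  have hA2 : Nat.card {a : A | (Finset.univ.filter (fun i => a ∉ As i)).card = r}
      = (Finset.univ.filter (fun a : A => ((SA a)ᶜ).card = r)).card := by
    simp only [hwA]
    simp [Nat.card_eq_fintype_card, Fintype.card_subtype]
  have e1 := stmt_17_aux_sum SG (fun U => (Uᶜ).card = r) (fun g => inferInstance)
  have e2 := stmt_17_aux_sum SA (fun U => (Uᶜ).card = r) (fun a => inferInstance)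
  rw [hG2, hA2]
  have hfin := e1.trans ((Finset.sum_congr rfl fun U _ => key' U).trans e2.symm)
  beta_reduce at hfin
  exact hfin
end

section
/- Let G be a finite group and G i (i : Fin n) a family of subgroups, and let C = Set.range φ be the quasi-uniform code, where φ(g) = (QuotientGroup.mk g : G ⧸ G i)_i. Then the distance profile of C is independent of the center: for every r : ℕ and all c, c' ∈ C, Nat.card {x ∈ C | hammingDist c x = r} = Nat.card {x ∈ C | hammingDist c' x = r}. -/
attribute [local instance] Classical.propDecidable

theorem stmt_18 {G : Type*} [Group G] [Finite G] {n : ℕ} (Gs : Fin n → Subgroup G)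
    (r : ℕ) (c c' : ∀ i, G ⧸ Gs i)
    (hc : c ∈ Set.range (fun g : G => fun i => (QuotientGroup.mk g : G ⧸ Gs i)))
    (hc' : c' ∈ Set.range (fun g : G => fun i => (QuotientGroup.mk g : G ⧸ Gs i))) :
    Nat.card {x ∈ Set.range (fun g : G => fun i => (QuotientGroup.mk g : G ⧸ Gs i)) |
        hammingDist c x = r}
      = Nat.card {x ∈ Set.range (fun g : G => fun i => (QuotientGroup.mk g : G ⧸ Gs i)) |
        hammingDist c' x = r} := by
  classical
  obtain ⟨g, rfl⟩ := hc
  obtain ⟨g', rfl⟩ := hc'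
  set a : G := g' * g⁻¹ with ha
  have key : ∀ (x : ∀ i, G ⧸ Gs i),
      hammingDist (fun i => (QuotientGroup.mk g' : G ⧸ Gs i)) (fun i => a • x i)
        = hammingDist (fun i => (QuotientGroup.mk g : G ⧸ Gs i)) x := by
    intro x
    unfold hammingDist
    congr 1
    apply Finset.filter_congr
    intro i _
    have h1 : (QuotientGroup.mk g' : G ⧸ Gs i) = a • (QuotientGroup.mk g : G ⧸ Gs i) := by
      rw [ha]
      show _ = QuotientGroup.mk (g' * g⁻¹ * g)
      rw [inv_mul_cancel_right]
    show (QuotientGroup.mk g' : G ⧸ Gs i) ≠ a • x i ↔ (QuotientGroup.mk g : G ⧸ Gs i) ≠ x i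
    rw [h1]
    exact not_congr (smul_left_cancel_iff a)
  apply Nat.card_congr
  refine ⟨fun x => ⟨fun i => a • (x : ∀ i, G ⧸ Gs i) i, ?_, ?_⟩,
          fun x => ⟨fun i => a⁻¹ • (x : ∀ i, G ⧸ Gs i) i, ?_, ?_⟩, ?_, ?_⟩
  · obtain ⟨x, hx, hd⟩ := x
    obtain ⟨h, rfl⟩ := hx
    exact ⟨a * h, by funext i; show _ = a • (QuotientGroup.mk h : G ⧸ Gs i); rfl⟩
  · obtain ⟨x, hx, hd⟩ := x
    rw [key]; exact hd
  · obtain ⟨x, hx, hd⟩ := x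
    obtain ⟨h, rfl⟩ := hx
    refine ⟨a⁻¹ * h, ?_⟩
    funext i
    show _ = a⁻¹ • (QuotientGroup.mk h : G ⧸ Gs i)
    rfl
  · obtain ⟨x, hx, hd⟩ := x
    have := key (fun i => a⁻¹ • x i)
    simp only [smul_inv_smul] at this
    show (hammingDist (fun i => (QuotientGroup.mk g : G ⧸ Gs i)) fun i => a⁻¹ • x i) = r
    rw [← this]
    exact hd
  · rintro ⟨x, hx⟩
    ext i
    exact inv_smul_smul a (x i)
  · rintro ⟨x, hx⟩
    ext i
    exact smul_inv_smul a (x i)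
end
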